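/- Two reduced 2-cocycles α, α' on ℤ×ℤ with values in an abelian group G differ by a coboundary if and only if the induced skew-symmetrizations agree: α(a,b)·α(b,a)⁻¹ = α'(a,b)·α'(b,a)⁻¹ for all a, b ∈ ℤ×ℤ. -/

import Mathlib

@[ext]
structure Ext13 (G : Type*) where
  g : G
  v : ℤ × ℤ

def ext13Group {G : Type*} [CommGroup G] (γ : ℤ × ℤ → ℤ × ℤ → G)
    (hc : ∀ a b c : ℤ × ℤ, γ (a + b) c * γ a b = γ b c * γ a (b + c))
    (hs : ∀ a b : ℤ × ℤ, γ a b = γ b a)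
    (h0l : ∀ c : ℤ × ℤ, γ 0 c = 1) (h0r : ∀ a : ℤ × ℤ, γ a 0 = 1) :
    CommGroup (Ext13 G) where
  mul p q := ⟨p.g * q.g * γ p.v q.v, p.v + q.v⟩
  one := ⟨1, 0⟩
  inv p := ⟨p.g⁻¹ * (γ p.v (-p.v))⁻¹, -p.v⟩
  mul_assoc p q r := by
    ext : 1
    · show p.g * q.g * γ p.v q.v * r.g * γ (p.v + q.v) r.v
        = p.g * (q.g * r.g * γ q.v r.v) * γ p.v (q.v + r.v)
      calc p.g * q.g * γ p.v q.v * r.g * γ (p.v + q.v) r.v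
          = p.g * q.g * r.g * (γ (p.v + q.v) r.v * γ p.v q.v) := by ac_rfl
        _ = p.g * q.g * r.g * (γ q.v r.v * γ p.v (q.v + r.v)) := by rw [hc]
        _ = p.g * (q.g * r.g * γ q.v r.v) * γ p.v (q.v + r.v) := by ac_rfl
    · show p.v + q.v + r.v = p.v + (q.v + r.v); ring
  one_mul p := by
    ext : 1
    · show 1 * p.g * γ 0 p.v = p.g; simp [h0l]
    · show 0 + p.v = p.v; simp
  mul_one p := by
    ext : 1
    · show p.g * 1 * γ p.v 0 = p.g; simp [h0r]
    · show p.v + 0 = p.v; simp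
  inv_mul_cancel p := by
    ext : 1
    · show p.g⁻¹ * (γ p.v (-p.v))⁻¹ * p.g * γ (-p.v) p.v = 1
      rw [← hs]
      simp [mul_comm, mul_left_comm, mul_assoc]
    · show -p.v + p.v = 0; ring
  mul_comm p q := by
    ext : 1
    · show p.g * q.g * γ p.v q.v = q.g * p.g * γ q.v p.v
      rw [hs, mul_comm p.g]
    · show p.v + q.v = q.v + p.v; ring

lemma symm_cocycle_is_coboundary {G : Type*} [CommGroup G] (γ : ℤ × ℤ → ℤ × ℤ → G)
    (hc : ∀ a b c : ℤ × ℤ, γ (a + b) c * γ a b = γ b c * γ a (b + c))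
    (hs : ∀ a b : ℤ × ℤ, γ a b = γ b a) (h0 : γ 0 0 = 1) :
    ∃ β : ℤ × ℤ → G, ∀ a b : ℤ × ℤ, γ a b = β a * β b * (β (a + b))⁻¹ := by
  have h0l : ∀ c : ℤ × ℤ, γ 0 c = 1 := by
    intro c
    have h := hc 0 0 c
    simp only [add_zero, zero_add, h0, mul_one] at h
    exact left_eq_mul.mp h
  have h0r : ∀ a : ℤ × ℤ, γ a 0 = 1 := by
    intro a
    have h := hc a 0 0
    simp only [add_zero, zero_add, h0, one_mul] at h
    exact mul_left_cancel (h.trans (mul_one _).symm)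
  letI I : CommGroup (Ext13 G) := ext13Group γ hc hs h0l h0r
  have mulg : ∀ p q : Ext13 G, (p * q).g = p.g * q.g * γ p.v q.v := fun _ _ => rfl
  let π : Ext13 G →* Multiplicative (ℤ × ℤ) :=
    { toFun := fun p => Multiplicative.ofAdd p.v
      map_one' := rfl
      map_mul' := fun p q => rfl }
  let x : Ext13 G := ⟨1, (1, 0)⟩
  let y : Ext13 G := ⟨1, (0, 1)⟩
  let s : ℤ × ℤ → Ext13 G := fun a => x ^ a.1 * y ^ a.2
  have hπ : ∀ p : Ext13 G, π p = Multiplicative.ofAdd p.v := fun _ => rfl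
  have hsv : ∀ a : ℤ × ℤ, (s a).v = a := by
    intro a
    have : π (s a) = Multiplicative.ofAdd a := by
      rw [show s a = x ^ a.1 * y ^ a.2 from rfl, map_mul, map_zpow, map_zpow, hπ x, hπ y,
        ← ofAdd_zsmul, ← ofAdd_zsmul, ← ofAdd_add]
      congr 1
      simp [Prod.ext_iff, x, y]
    simpa [hπ] using this
  have hadd : ∀ a b : ℤ × ℤ, s (a + b) = s a * s b := by
    intro a b
    show x ^ (a + b).1 * y ^ (a + b).2 = x ^ a.1 * y ^ a.2 * (x ^ b.1 * y ^ b.2)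
    rw [Prod.fst_add, Prod.snd_add, zpow_add, zpow_add]
    ac_rfl
  refine ⟨fun a => ((s a).g)⁻¹, fun a b => ?_⟩
  have h := congrArg Ext13.g (hadd a b)
  rw [mulg (s a) (s b), hsv, hsv] at h
  show γ a b = (s a).g⁻¹ * (s b).g⁻¹ * ((s (a + b)).g⁻¹)⁻¹
  rw [inv_inv, h]
  simp [mul_comm, mul_left_comm, mul_assoc]

/-- Two reduced 2-cocycles α, α' on ℤ×ℤ with values in an abelian group G differ
by a coboundary iff their skew-symmetrizations agree. -/
theorem stmt_13 {G : Type*} [CommGroup G] (α α' : ℤ × ℤ → ℤ × ℤ → G)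
    (hα : ∀ a b c : ℤ × ℤ, α (a + b) c * α a b = α b c * α a (b + c))
    (hα' : ∀ a b c : ℤ × ℤ, α' (a + b) c * α' a b = α' b c * α' a (b + c))
    (hrα : α 0 0 = 1) (hrα' : α' 0 0 = 1) :
    (∃ β : ℤ × ℤ → G, ∀ a b : ℤ × ℤ,
        α a b = α' a b * (β a * β b * (β (a + b))⁻¹)) ↔
      (∀ a b : ℤ × ℤ, α a b * (α b a)⁻¹ = α' a b * (α' b a)⁻¹) := by
  constructor
  · rintro ⟨β, hβ⟩ a b
    rw [hβ a b, hβ b a, add_comm b a, mul_comm (β b) (β a), mul_inv, mul_mul_mul_comm,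
      mul_inv_cancel, mul_one]
  · intro h
    have hc : ∀ a b c : ℤ × ℤ,
        (α (a + b) c * (α' (a + b) c)⁻¹) * (α a b * (α' a b)⁻¹)
          = (α b c * (α' b c)⁻¹) * (α a (b + c) * (α' a (b + c))⁻¹) := by
      intro a b c
      calc (α (a + b) c * (α' (a + b) c)⁻¹) * (α a b * (α' a b)⁻¹)
          = (α (a + b) c * α a b) * ((α' (a + b) c)⁻¹ * (α' a b)⁻¹) := by ac_rfl
        _ = (α (a + b) c * α a b) * (α' (a + b) c * α' a b)⁻¹ := by rw [mul_inv]
        _ = (α b c * α a (b + c)) * (α' b c * α' a (b + c))⁻¹ := by rw [hα, hα']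
        _ = (α b c * (α' b c)⁻¹) * (α a (b + c) * (α' a (b + c))⁻¹) := by
            rw [mul_inv]; ac_rfl
    have hsym : ∀ a b : ℤ × ℤ, α a b * (α' a b)⁻¹ = α b a * (α' b a)⁻¹ := by
      intro a b
      have h1 := h a b
      rw [mul_inv_eq_iff_eq_mul] at h1 ⊢
      rw [h1]
      ac_rfl
    obtain ⟨β, hβ⟩ := symm_cocycle_is_coboundary (fun a b => α a b * (α' a b)⁻¹)
      hc hsym (by show α 0 0 * (α' 0 0)⁻¹ = 1; rw [hrα, hrα']; simp)
    refine ⟨β, fun a b => ?_⟩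
    rw [← hβ a b]
    simp [mul_comm, mul_left_comm, mul_assoc]
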